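/- For 0 < q < 1 and |z| < 1, the series Σ_{n=0}^∞ z^n/(q;q)_n converges and equals 1/(z;q)_∞ = 1/∏_{k=0}^∞ (1 - z q^k). -/

import Mathlib

set_option maxHeartbeats 800000


open Finset Filter Topology

noncomputable def qPoch (q : ℝ) (m : ℕ) : ℝ := ∏ j ∈ Finset.range m, (1 - q ^ (j + 1))

/-- Tail of the q-exponential e(q;z) starting at index m; I_n(q;z) = qexpTail q z (n+1). -/
noncomputable def qexpTail (q z : ℝ) (m : ℕ) : ℝ := ∑' k : ℕ, z ^ (m + k) / qPoch q (m + k)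

section aux

variable {q : ℝ}

lemma qPoch_pos (hq0 : 0 < q) (hq1 : q < 1) (n : ℕ) : 0 < qPoch q n := by
  refine Finset.prod_pos fun j _ => ?_
  have : q ^ (j + 1) < 1 := pow_lt_one₀ hq0.le hq1 (Nat.succ_ne_zero j)
  linarith

lemma qPoch_succ (n : ℕ) : qPoch q (n + 1) = qPoch q n * (1 - q ^ (n + 1)) :=
  Finset.prod_range_succ _ _

lemma qPoch_ge (hq0 : 0 < q) (hq1 : q < 1) (n : ℕ) :
    Real.exp (-(q / ((1 - q) * (1 - q)))) ≤ qPoch q n := by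
  have h1q : 0 < 1 - q := by linarith
  have key : ∀ j : ℕ, Real.exp (-(q ^ (j + 1) / (1 - q))) ≤ 1 - q ^ (j + 1) := by
    intro j
    set x := q ^ (j + 1) with hxdef
    have hx0 : 0 < x := pow_pos hq0 _
    have hx1 : x < 1 := pow_lt_one₀ hq0.le hq1 (Nat.succ_ne_zero j)
    have hxq : x ≤ q := by
      calc x = q ^ (j + 1) := rfl
        _ ≤ q ^ 1 := pow_le_pow_of_le_one hq0.le hq1.le (by omega)
        _ = q := pow_one q
    have h1x : 0 < 1 - x := by linarith
    have step1 : Real.exp (-(x / (1 - q))) ≤ Real.exp (-(x / (1 - x))) := by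
      apply Real.exp_le_exp.mpr
      have : x / (1 - x) ≤ x / (1 - q) := by
        apply div_le_div_of_nonneg_left hx0.le h1q
        linarith
      linarith
    have step2 : Real.exp (-(x / (1 - x))) ≤ 1 - x := by
      have h2 : x / (1 - x) + 1 = (1 - x)⁻¹ := by field_simp; ring
      have h3 : (1 - x)⁻¹ ≤ Real.exp (x / (1 - x)) := by
        have := Real.add_one_le_exp (x / (1 - x))
        linarith
      have h4 : Real.exp (-(x / (1 - x))) = (Real.exp (x / (1 - x)))⁻¹ := Real.exp_neg _
      rw [h4]
      have h5 := inv_anti₀ (inv_pos.mpr h1x) h3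
      rwa [inv_inv] at h5
    exact step1.trans step2
  have hsum : ∑ j ∈ Finset.range n, q ^ (j + 1) ≤ q / (1 - q) := by
    have hg : Summable fun j : ℕ => q ^ j := summable_geometric_of_lt_one hq0.le hq1
    have h1 : ∑ j ∈ Finset.range n, q ^ j ≤ (1 - q)⁻¹ := by
      have := Summable.sum_le_tsum (Finset.range n) (fun i _ => (pow_pos hq0 i).le) hg
      rwa [tsum_geometric_of_lt_one hq0.le hq1] at this
    have h2 : ∑ j ∈ Finset.range n, q ^ (j + 1) = q * ∑ j ∈ Finset.range n, q ^ j := by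
      rw [Finset.mul_sum]
      exact Finset.sum_congr rfl fun j _ => by ring
    rw [h2, div_eq_mul_inv]
    exact mul_le_mul_of_nonneg_left h1 hq0.le
  calc Real.exp (-(q / ((1 - q) * (1 - q))))
      ≤ Real.exp (∑ j ∈ Finset.range n, -(q ^ (j + 1) / (1 - q))) := by
        apply Real.exp_le_exp.mpr
        have : ∑ j ∈ Finset.range n, -(q ^ (j + 1) / (1 - q))
            = -((∑ j ∈ Finset.range n, q ^ (j + 1)) / (1 - q)) := by
          rw [Finset.sum_div, ← Finset.sum_neg_distrib]
        rw [this]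
        have hsum2 : (∑ j ∈ Finset.range n, q ^ (j + 1)) * (1 - q) ≤ q :=
          (le_div_iff₀ h1q).mp hsum
        have : (∑ j ∈ Finset.range n, q ^ (j + 1)) / (1 - q) ≤ q / ((1 - q) * (1 - q)) := by
          rw [div_le_div_iff₀ h1q (by positivity)]
          nlinarith
        linarith
    _ = ∏ j ∈ Finset.range n, Real.exp (-(q ^ (j + 1) / (1 - q))) := Real.exp_sum _ _
    _ ≤ qPoch q n :=
        Finset.prod_le_prod (fun j _ => (Real.exp_pos _).le) (fun j _ => key j)

lemma summable_qexp (hq0 : 0 < q) (hq1 : q < 1) {w : ℝ} (hw : |w| < 1) :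
    Summable fun n : ℕ => w ^ n / qPoch q n := by
  set C := Real.exp (-(q / ((1 - q) * (1 - q)))) with hC
  have hCpos : 0 < C := Real.exp_pos _
  apply Summable.of_norm
  refine Summable.of_nonneg_of_le (fun n => norm_nonneg _) (fun n => ?_)
    ((summable_geometric_of_lt_one (abs_nonneg w) hw).div_const C)
  rw [Real.norm_eq_abs, abs_div, abs_pow, abs_of_pos (qPoch_pos hq0 hq1 n)]
  exact div_le_div_of_nonneg_left (pow_nonneg (abs_nonneg w) n) hCpos (qPoch_ge hq0 hq1 n)

lemma qexp_tail_bound (hq0 : 0 < q) (hq1 : q < 1) {w : ℝ} (hw : |w| < 1) :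
    |(∑' n : ℕ, w ^ n / qPoch q n) - 1|
      ≤ |w| / (1 - |w|) * (Real.exp (-(q / ((1 - q) * (1 - q)))))⁻¹ := by
  set C := Real.exp (-(q / ((1 - q) * (1 - q)))) with hC
  have hCpos : 0 < C := Real.exp_pos _
  have hs : Summable fun n : ℕ => w ^ n / qPoch q n := summable_qexp hq0 hq1 hw
  have hs1 : Summable fun n : ℕ => w ^ (n + 1) / qPoch q (n + 1) :=
    (summable_nat_add_iff (f := fun n : ℕ => w ^ n / qPoch q n) 1).mpr hs
  have h0 : w ^ 0 / qPoch q 0 = 1 := by simp [qPoch]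
  have hsplit : (∑' n : ℕ, w ^ n / qPoch q n) - 1 = ∑' n : ℕ, w ^ (n + 1) / qPoch q (n + 1) := by
    rw [hs.tsum_eq_zero_add, h0]; ring
  rw [hsplit]
  have hgeo : HasSum (fun n : ℕ => |w| * C⁻¹ * |w| ^ n) (|w| * C⁻¹ * (1 - |w|)⁻¹) :=
    (hasSum_geometric_of_lt_one (abs_nonneg w) hw).mul_left _
  have hb : ‖∑' n : ℕ, w ^ (n + 1) / qPoch q (n + 1)‖ ≤ |w| * C⁻¹ * (1 - |w|)⁻¹ := by
    refine tsum_of_norm_bounded hgeo fun n => ?_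
    rw [Real.norm_eq_abs, abs_div, abs_pow, abs_of_pos (qPoch_pos hq0 hq1 (n + 1))]
    have h1 : |w| ^ (n + 1) / qPoch q (n + 1) ≤ |w| ^ (n + 1) / C :=
      div_le_div_of_nonneg_left (pow_nonneg (abs_nonneg w) _) hCpos (qPoch_ge hq0 hq1 (n + 1))
    have h2 : |w| ^ (n + 1) / C = |w| * C⁻¹ * |w| ^ n := by
      rw [pow_succ, div_eq_mul_inv]; ring
    linarith
  rw [Real.norm_eq_abs] at hb
  have heq : |w| * C⁻¹ * (1 - |w|)⁻¹ = |w| / (1 - |w|) * C⁻¹ := by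
    rw [div_eq_mul_inv]; ring
  linarith

lemma qexp_funct_eq (hq0 : 0 < q) (hq1 : q < 1) {w : ℝ} (hw : |w| < 1) :
    (∑' n : ℕ, w ^ n / qPoch q n) * (1 - w) = ∑' n : ℕ, (q * w) ^ n / qPoch q n := by
  have hqw : |q * w| < 1 := by
    rw [abs_mul, abs_of_pos hq0]
    calc q * |w| ≤ 1 * |w| := mul_le_mul_of_nonneg_right hq1.le (abs_nonneg w)
      _ = |w| := one_mul _
      _ < 1 := hw
  have hs : Summable fun n : ℕ => w ^ n / qPoch q n := summable_qexp hq0 hq1 hw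
  have hsq : Summable fun n : ℕ => (q * w) ^ n / qPoch q n := summable_qexp hq0 hq1 hqw
  have hs1 : Summable fun n : ℕ => w ^ (n + 1) / qPoch q (n + 1) :=
    (summable_nat_add_iff (f := fun n : ℕ => w ^ n / qPoch q n) 1).mpr hs
  have hs2 : Summable fun n : ℕ => w ^ (n + 1) / qPoch q n := by
    have := hs.mul_right w
    refine this.congr fun n => ?_
    rw [div_mul_eq_mul_div, ← pow_succ]
  have h0 : w ^ 0 / qPoch q 0 = 1 := by simp [qPoch]
  have h0q : (q * w) ^ 0 / qPoch q 0 = 1 := by simp [qPoch]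
  have hSw : (∑' n : ℕ, w ^ n / qPoch q n) * w = ∑' n : ℕ, w ^ (n + 1) / qPoch q n := by
    rw [← tsum_mul_right]
    exact tsum_congr fun n => by rw [div_mul_eq_mul_div, ← pow_succ]
  have key : ∑' n : ℕ, (q * w) ^ (n + 1) / qPoch q (n + 1)
      = (∑' n : ℕ, w ^ (n + 1) / qPoch q (n + 1)) - ∑' n : ℕ, w ^ (n + 1) / qPoch q n := by
    rw [← hs1.tsum_sub hs2]
    refine tsum_congr fun n => ?_
    have hPn : qPoch q n ≠ 0 := (qPoch_pos hq0 hq1 n).ne'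
    have hqn : (1 : ℝ) - q ^ (n + 1) ≠ 0 := by
      have : q ^ (n + 1) < 1 := pow_lt_one₀ hq0.le hq1 (Nat.succ_ne_zero n)
      linarith
    rw [qPoch_succ, mul_pow]
    field_simp
    ring
  rw [mul_one_sub, hSw, hs.tsum_eq_zero_add, hsq.tsum_eq_zero_add, h0, h0q, key]
  ring

end aux

theorem euler_q_exponential (q z : ℝ) (hq0 : 0 < q) (hq1 : q < 1) (hz : |z| < 1) :
    Summable (fun n : ℕ => z ^ n / qPoch q n) ∧
    ∑' n : ℕ, z ^ n / qPoch q n = (∏' k : ℕ, (1 - z * q ^ k))⁻¹ := by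
  have h1z : 0 < 1 - |z| := by linarith [abs_nonneg z]
  set C := Real.exp (-(q / ((1 - q) * (1 - q)))) with hC
  have hCpos : 0 < C := Real.exp_pos _
  have hs : Summable fun n : ℕ => z ^ n / qPoch q n := summable_qexp hq0 hq1 hz
  refine ⟨hs, ?_⟩
  set S := ∑' n : ℕ, z ^ n / qPoch q n with hSdef
  -- small powers stay in the unit ball
  have habsN : ∀ N : ℕ, |q ^ N * z| ≤ |z| := by
    intro N
    rw [abs_mul, abs_of_pos (pow_pos hq0 N)]
    calc q ^ N * |z| ≤ 1 * |z| :=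
        mul_le_mul_of_nonneg_right (pow_le_one₀ hq0.le hq1.le) (abs_nonneg z)
      _ = |z| := one_mul _
  have hwN : ∀ N : ℕ, |q ^ N * z| < 1 := fun N => lt_of_le_of_lt (habsN N) hz
  -- iteration of the functional equation
  have hiter : ∀ N : ℕ,
      S * ∏ k ∈ Finset.range N, (1 - z * q ^ k)
        = ∑' n : ℕ, (q ^ N * z) ^ n / qPoch q n := by
    intro N
    induction N with
    | zero => simp [hSdef]
    | succ N ih =>
      rw [Finset.prod_range_succ, ← mul_assoc, ih]
      have := qexp_funct_eq hq0 hq1 (hwN N)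
      have heq : (1 : ℝ) - z * q ^ N = 1 - q ^ N * z := by ring
      rw [heq, this]
      refine tsum_congr fun n => ?_
      congr 2
      ring
  -- factors are positive
  have hfac : ∀ k : ℕ, 0 < 1 - z * q ^ k := by
    intro k
    have h1 : z * q ^ k ≤ |z * q ^ k| := le_abs_self _
    have h2 : |z * q ^ k| ≤ |z| := by
      rw [abs_mul, abs_of_pos (pow_pos hq0 k)]
      calc |z| * q ^ k ≤ |z| * 1 :=
          mul_le_mul_of_nonneg_left (pow_le_one₀ hq0.le hq1.le) (abs_nonneg z)
        _ = |z| := mul_one _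
    linarith
  -- summability of logs, hence multipliability
  have hlog : Summable fun k : ℕ => Real.log (1 - z * q ^ k) := by
    apply Summable.of_norm
    refine Summable.of_nonneg_of_le (fun k => norm_nonneg _) (fun k => ?_)
      (((summable_geometric_of_lt_one hq0.le hq1).mul_left (|z| * (1 - |z|)⁻¹)))
    set t := z * q ^ k with htdef
    set x := 1 - t with hxdef
    have hxpos : 0 < x := hfac k
    have habt : |t| = |z| * q ^ k := by
      rw [htdef, abs_mul, abs_of_pos (pow_pos hq0 k)]
    have habt2 : |t| ≤ |z| := by
      rw [habt]
      calc |z| * q ^ k ≤ |z| * 1 :=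
          mul_le_mul_of_nonneg_left (pow_le_one₀ hq0.le hq1.le) (abs_nonneg z)
        _ = |z| := mul_one _
    have hxge : 1 - |z| ≤ x := by
      have := le_abs_self t
      simp only [hxdef]
      linarith
    have hxinv : x⁻¹ ≤ (1 - |z|)⁻¹ := inv_anti₀ h1z hxge
    have hub : Real.log x ≤ |t| * (1 - |z|)⁻¹ := by
      have h1 : Real.log x ≤ x - 1 := Real.log_le_sub_one_of_pos hxpos
      have h2 : x - 1 = -t := by rw [hxdef]; ring
      have h3 : -t ≤ |t| := neg_le_abs t
      have h5 : (1 : ℝ) ≤ (1 - |z|)⁻¹ := by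
        rw [le_inv_comm₀]
        · linarith [abs_nonneg z]
        · exact one_pos
        · exact h1z
      have h4 : |t| ≤ |t| * (1 - |z|)⁻¹ := by
        nlinarith [abs_nonneg t]
      linarith
    have hlb : -(|t| * (1 - |z|)⁻¹) ≤ Real.log x := by
      have h1 : Real.log x⁻¹ ≤ x⁻¹ - 1 := Real.log_le_sub_one_of_pos (inv_pos.mpr hxpos)
      rw [Real.log_inv] at h1
      have h2 : x⁻¹ - 1 = t * x⁻¹ := by
        field_simp [hxdef]; linarith
      have h3 : t * x⁻¹ ≤ |t| * (1 - |z|)⁻¹ :=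
        mul_le_mul (le_abs_self t) hxinv (inv_pos.mpr hxpos).le (abs_nonneg t)
      linarith
    rw [Real.norm_eq_abs]
    have : |Real.log x| ≤ |t| * (1 - |z|)⁻¹ := abs_le.mpr ⟨hlb, hub⟩
    calc |Real.log x| ≤ |t| * (1 - |z|)⁻¹ := this
      _ = |z| * (1 - |z|)⁻¹ * q ^ k := by rw [habt]; ring
  have hM : Multipliable fun k : ℕ => 1 - z * q ^ k :=
    Real.multipliable_of_summable_log hfac hlog
  set T := ∏' k : ℕ, (1 - z * q ^ k) with hT
  have hprod : Tendsto (fun N => ∏ k ∈ Finset.range N, (1 - z * q ^ k)) atTop (𝓝 T) :=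
    hM.hasProd.tendsto_prod_nat
  have hST : Tendsto (fun N => S * ∏ k ∈ Finset.range N, (1 - z * q ^ k)) atTop (𝓝 (S * T)) :=
    hprod.const_mul S
  have hone : Tendsto (fun N => ∑' n : ℕ, (q ^ N * z) ^ n / qPoch q n) atTop (𝓝 1) := by
    rw [← tendsto_sub_nhds_zero_iff]
    apply squeeze_zero_norm (a := fun N => |z| / (1 - |z|) * C⁻¹ * q ^ N)
    · intro N
      rw [Real.norm_eq_abs]
      have hb := qexp_tail_bound hq0 hq1 (hwN N)
      have habs : |q ^ N * z| = q ^ N * |z| := by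
        rw [abs_mul, abs_of_pos (pow_pos hq0 N)]
      have hden : 1 - |z| ≤ 1 - q ^ N * |z| := by
        have h := habsN N
        rw [habs] at h
        linarith
      have hstep : |q ^ N * z| / (1 - |q ^ N * z|) ≤ q ^ N * |z| / (1 - |z|) := by
        rw [habs]
        exact div_le_div_of_nonneg_left (by positivity) h1z hden
      have : |q ^ N * z| / (1 - |q ^ N * z|) * C⁻¹ ≤ q ^ N * |z| / (1 - |z|) * C⁻¹ :=
        mul_le_mul_of_nonneg_right hstep (inv_pos.mpr hCpos).le
      calc |(∑' n : ℕ, (q ^ N * z) ^ n / qPoch q n) - 1|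
          ≤ |q ^ N * z| / (1 - |q ^ N * z|) * C⁻¹ := hb
        _ ≤ q ^ N * |z| / (1 - |z|) * C⁻¹ := this
        _ = |z| / (1 - |z|) * C⁻¹ * q ^ N := by ring
    · have := (tendsto_pow_atTop_nhds_zero_of_lt_one hq0.le hq1).const_mul
        (|z| / (1 - |z|) * C⁻¹)
      simpa using this
  have h2 : Tendsto (fun N => S * ∏ k ∈ Finset.range N, (1 - z * q ^ k)) atTop (𝓝 1) := by
    simp only [hiter]
    exact hone
  have hST1 : S * T = 1 := tendsto_nhds_unique hST h2
  exact eq_inv_of_mul_eq_one_left hST1
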